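/- If a finite simple graph G has a C3-free vertex x (a non-isolated vertex belonging to no triangle of G), then G is not a universal fixer; that is, there exists a permutation π of V(G) with γ(πG) > γ(G). -/

import Mathlib

open SimpleGraph

variable {V : Type*}

/-- `D` is a dominating set of `G`: every vertex is in `D` or adjacent to a vertex of `D`. -/
def IsDomSet (G : SimpleGraph V) (D : Set V) : Prop :=
  ∀ v : V, ∃ d ∈ D, d = v ∨ G.Adj d v

/-- The domination number of `G`: minimum cardinality of a dominating set. -/
noncomputable def domNum (G : SimpleGraph V) : ℕ :=
  sInf {n | ∃ D : Set V, IsDomSet G D ∧ D.ncard = n}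

/-- The prism `πG` of `G`: two disjoint copies of `G` together with the matching
`{u (π u) : u ∈ V(G)}`, the second copy playing the role of `G'`. -/
def prism (G : SimpleGraph V) (π : Equiv.Perm V) : SimpleGraph (V ⊕ V) where
  Adj a b :=
    match a, b with
    | Sum.inl u, Sum.inl v => G.Adj u v
    | Sum.inr u, Sum.inr v => G.Adj u v
    | Sum.inl u, Sum.inr v => π u = v
    | Sum.inr u, Sum.inl v => π v = u
  symm := ⟨by
    rintro (u | u) (v | v) h
    · exact G.adj_symm h
    · exact h
    · exact h
    · exact G.adj_symm h⟩
  loopless := ⟨by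
    rintro (u | u) h
    · exact G.irrefl h
    · exact G.irrefl h⟩

/-- The closed neighborhood `N[v]` of a vertex. -/
def closedNbhd (G : SimpleGraph V) (v : V) : Set V :=
  insert v (G.neighborSet v)

/-- `x` is a `C₃`-free vertex: non-isolated and belonging to no triangle of `G`. -/
def C3Free (G : SimpleGraph V) (x : V) : Prop :=
  (∃ y, G.Adj x y) ∧ ∀ u v : V, G.Adj x u → G.Adj x v → ¬ G.Adj u v

/-- `A = A1 ∪ A2` is a separable γ-set of `G` (an `A1`-γ-set): `A1, A2` are nonempty,
disjoint, `A` is a γ-set, and `A1` dominates `V(G) - A`. -/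
def SepGammaSet (G : SimpleGraph V) (A1 A2 : Set V) : Prop :=
  A1.Nonempty ∧ A2.Nonempty ∧ Disjoint A1 A2 ∧
  IsDomSet G (A1 ∪ A2) ∧ (A1 ∪ A2).ncard = domNum G ∧
  ∀ v ∉ A1 ∪ A2, ∃ u ∈ A1, G.Adj u v

/-- The separable γ-set `A = A1 ∪ A2` is effective under `π`: `π(A)` is a γ-set of the
copy `G'` of `G` (identified with `G`) whose dominating part is `B2' = π(A2)`,
i.e. `π(A2)` dominates `V(G') - π(A)`. -/
def Effective (G : SimpleGraph V) (π : Equiv.Perm V) (A1 A2 : Set V) : Prop :=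
  IsDomSet G (⇑π '' (A1 ∪ A2)) ∧ (⇑π '' (A1 ∪ A2)).ncard = domNum G ∧
  ∀ v ∉ ⇑π '' (A1 ∪ A2), ∃ u ∈ ⇑π '' A2, G.Adj u v

/-- The star `K_{1,m}` on `Fin (m+1)`, with center `0` adjacent to the `m` leaves. -/
def starGraph (m : ℕ) : SimpleGraph (Fin (m + 1)) where
  Adj a b := (a = 0 ∧ b ≠ 0) ∨ (b = 0 ∧ a ≠ 0)
  symm := ⟨fun a b h => Or.symm h⟩
  loopless := ⟨fun a h => by rcases h with ⟨h1, h2⟩ | ⟨h1, h2⟩ <;> exact h2 h1⟩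

private lemma isDomSet_univ' (G : SimpleGraph V) : IsDomSet G (Set.univ) :=
  fun v => ⟨v, Set.mem_univ v, Or.inl rfl⟩

private lemma exists_min_domSet (G : SimpleGraph V) :
    ∃ D : Set V, IsDomSet G D ∧ D.ncard = domNum G :=
  Nat.sInf_mem (s := {n | ∃ D : Set V, IsDomSet G D ∧ D.ncard = n})
    ⟨Set.univ.ncard, Set.univ, isDomSet_univ' G, rfl⟩

private lemma domNum_le_ncard (G : SimpleGraph V) {D : Set V} (h : IsDomSet G D) :
    domNum G ≤ D.ncard :=
  Nat.sInf_le ⟨D, h, rfl⟩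

private lemma no_nbr_of_min [Fintype V] (G : SimpleGraph V) (D D1 : Set V)
    (hcard : D.ncard = domNum G)
    (hdom : ∀ v ∉ D, ∃ u ∈ D1, G.Adj u v) (hsub : D1 ⊆ D)
    {a : V} (ha : a ∈ D) (ha1 : a ∉ D1) {b : V} (hab : G.Adj a b) : b ∉ D := by
  intro hbD
  have hdom' : IsDomSet G (D \ {a}) := by
    intro v
    by_cases hva : v = a
    · subst hva
      exact ⟨b, ⟨hbD, by simp [hab.ne']⟩, Or.inr hab.symm⟩
    · by_cases hvD : v ∈ D
      · exact ⟨v, ⟨hvD, by simp [hva]⟩, Or.inl rfl⟩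
      · obtain ⟨u, hu1, hu⟩ := hdom v hvD
        refine ⟨u, ⟨hsub hu1, ?_⟩, Or.inr hu⟩
        simp only [Set.mem_singleton_iff]
        rintro rfl; exact ha1 hu1
  have h1 : domNum G ≤ (D \ {a}).ncard := domNum_le_ncard G hdom'
  have h2 : (D \ {a}).ncard = D.ncard - 1 := Set.ncard_diff_singleton_of_mem ha
  have h3 : 0 < D.ncard := (Set.ncard_pos (Set.toFinite D)).2 ⟨a, ha⟩
  omega

/-- main theorem: if `G` has a `C₃`-free vertex, then `G` is not a universal
fixer. -/
theorem not_universal_fixer_of_c3free [Fintype V] (G : SimpleGraph V) (x : V)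
    (hx : C3Free G x) :
    ∃ π : Equiv.Perm V, domNum G < domNum (prism G π) := by
  classical
  obtain ⟨⟨y0, hy0⟩, hindep⟩ := hx
  -- the closed neighborhood N[x] as a finset
  set s : Finset V := (Set.toFinite (insert x (G.neighborSet x))).toFinset with hs_def
  have hmem_s : ∀ v, v ∈ s ↔ v = x ∨ G.Adj x v := by
    intro v
    rw [hs_def, Set.Finite.mem_toFinset, Set.mem_insert_iff, mem_neighborSet]
  have hxs : x ∈ s := (hmem_s x).2 (Or.inl rfl)
  have hN_s : ∀ {v : V}, G.Adj x v → v ∈ s := fun h => (hmem_s _).2 (Or.inr h)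
  have hs_N : ∀ {v : V}, v ∈ s → v ≠ x → G.Adj x v := by
    intro v hv hne
    rcases (hmem_s v).1 hv with h | h
    · exact absurd h hne
    · exact h
  set l : List V := s.toList with hl_def
  have hl : l.Nodup := s.nodup_toList
  have hmem_l : ∀ v, v ∈ l ↔ v ∈ s := fun v => Finset.mem_toList
  have hlen : 2 ≤ l.length := by
    have h1 : 1 < s.card :=
      Finset.one_lt_card_iff.2 ⟨x, y0, hxs, hN_s hy0, (G.ne_of_adj hy0)⟩
    have h2 : l.length = s.card := Finset.length_toList s
    omega
  set σ : Equiv.Perm V := l.formPerm with hσ_def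
  have hσ_not_mem : ∀ v, v ∉ s → σ v = v := fun v hv =>
    List.formPerm_apply_of_notMem (fun h => hv ((hmem_l v).1 h))
  have hσ_mem : ∀ v ∈ s, σ v ∈ s := fun v hv =>
    (hmem_l _).1 (List.formPerm_apply_mem_of_mem ((hmem_l v).2 hv))
  have hsupp : σ.support = l.toFinset := by
    refine List.support_formPerm_of_nodup l hl ?_
    intro z hz
    rw [hz] at hlen
    simp at hlen
  have hσ_ne : ∀ v ∈ s, σ v ≠ v := by
    intro v hv
    have hv' : v ∈ σ.support := by
      rw [hsupp, List.mem_toFinset]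
      exact (hmem_l v).2 hv
    exact Equiv.Perm.mem_support.1 hv'
  have hσ_symm_fix : ∀ v, v ∉ s → σ.symm v = v := by
    intro v hv
    have := hσ_not_mem v hv
    conv_lhs => rw [← this]
    exact σ.symm_apply_apply v
  have hσ_symm_mem : ∀ v ∈ s, σ.symm v ∈ s := by
    intro v hv
    by_contra h
    have h2 := hσ_not_mem _ h
    rw [σ.apply_symm_apply] at h2
    exact h (h2 ▸ hv)
  have hσ_symm_ne : ∀ v ∈ s, σ.symm v ≠ v := by
    intro v hv h
    have h2 : σ v = v := by
      nth_rewrite 1 [← h]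
      exact σ.apply_symm_apply v
    exact hσ_ne v hv h2
  have hcyc : σ.IsCycle := List.isCycle_formPerm hl hlen
  refine ⟨σ, ?_⟩
  by_contra hle
  push_neg at hle
  obtain ⟨S, hSdom, hScard⟩ := exists_min_domSet (prism G σ)
  have hScard' : S.ncard ≤ domNum G := by rw [hScard]; exact hle
  -- project to the two copies
  set A1 : Set V := {v | Sum.inl v ∈ S} with hA1_def
  set A2 : Set V := {v | Sum.inr (σ v) ∈ S} with hA2_def
  set A : Set V := A1 ∪ A2 with hA_def
  have hA1sub : A1 ⊆ A := Set.subset_union_left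
  have hA2sub : A2 ⊆ A := Set.subset_union_right
  -- A dominates G
  have hAdom : IsDomSet G A := by
    intro v
    obtain ⟨d, hdS, hd⟩ := hSdom (Sum.inl v)
    match d with
    | Sum.inl u =>
      rcases hd with h | h
      · have hv1 : v ∈ A1 := by rw [← Sum.inl.inj h]; exact hdS
        exact ⟨v, hA1sub hv1, Or.inl rfl⟩
      · exact ⟨u, hA1sub hdS, Or.inr h⟩
    | Sum.inr u =>
      rcases hd with h | h
      · exact absurd h (by simp)
      · have hv2 : v ∈ A2 := by
          show Sum.inr (σ v) ∈ S
          rw [show σ v = u from h]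
          exact hdS
        exact ⟨v, hA2sub hv2, Or.inl rfl⟩
  -- F1
  have hF1 : ∀ v ∉ A, ∃ u ∈ A1, G.Adj u v := by
    intro v hv
    obtain ⟨d, hdS, hd⟩ := hSdom (Sum.inl v)
    match d with
    | Sum.inl u =>
      rcases hd with h | h
      · exact absurd (hA1sub (show v ∈ A1 by rw [← Sum.inl.inj h]; exact hdS)) hv
      · exact ⟨u, hdS, h⟩
    | Sum.inr u =>
      rcases hd with h | h
      · exact absurd h (by simp)
      · have hv2 : v ∈ A2 := by
          show Sum.inr (σ v) ∈ S
          rw [show σ v = u from h]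
          exact hdS
        exact absurd (hA2sub hv2) hv
  -- cardinalities
  have himg1 : (Sum.inl '' A1 : Set (V ⊕ V)) ⊆ S := by rintro _ ⟨v, hv, rfl⟩; exact hv
  have himg2 : ((fun v => Sum.inr (σ v)) '' A2 : Set (V ⊕ V)) ⊆ S := by
    rintro _ ⟨v, hv, rfl⟩; exact hv
  have hdisj_img : Disjoint (Sum.inl '' A1) ((fun v => Sum.inr (σ v)) '' A2) := by
    rw [Set.disjoint_left]
    rintro _ ⟨v, hv, rfl⟩ ⟨w, hw, h⟩
    simp at h
  have hcard1 : (Sum.inl '' A1 : Set (V ⊕ V)).ncard = A1.ncard :=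
    Set.ncard_image_of_injective _ (Sum.inl_injective (α := V) (β := V))
  have hcard2 : ((fun v => Sum.inr (σ v)) '' A2 : Set (V ⊕ V)).ncard = A2.ncard :=
    Set.ncard_image_of_injective _ (Sum.inr_injective.comp σ.injective)
  have hsum_le : A1.ncard + A2.ncard ≤ S.ncard := by
    rw [← hcard1, ← hcard2, ← Set.ncard_union_eq hdisj_img (Set.toFinite _) (Set.toFinite _)]
    exact Set.ncard_le_ncard (Set.union_subset himg1 himg2) (Set.toFinite S)
  have hγA : domNum G ≤ A.ncard := domNum_le_ncard G hAdom
  have hAle : A.ncard ≤ A1.ncard + A2.ncard := Set.ncard_union_le _ _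
  have hAcard : A.ncard = domNum G := le_antisymm (by omega) hγA
  have hinter : (A1 ∩ A2).ncard = 0 := by
    have h := Set.ncard_union_add_ncard_inter A1 A2 (Set.toFinite _) (Set.toFinite _)
    rw [← hA_def] at h
    omega
  have hdisj : Disjoint A1 A2 :=
    Set.disjoint_iff_inter_eq_empty.2 ((Set.ncard_eq_zero (Set.toFinite _)).1 hinter)
  -- the image side
  have hmemB : ∀ v, v ∈ ⇑σ '' A ↔ σ.symm v ∈ A := fun v => Set.mem_image_equiv
  have hmemB1 : ∀ v, v ∈ ⇑σ '' A1 ↔ σ.symm v ∈ A1 := fun v => Set.mem_image_equiv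
  have hmemB2 : ∀ v, v ∈ ⇑σ '' A2 ↔ σ.symm v ∈ A2 := fun v => Set.mem_image_equiv
  have hB1sub : ⇑σ '' A1 ⊆ ⇑σ '' A := Set.image_mono hA1sub
  have hB2sub : ⇑σ '' A2 ⊆ ⇑σ '' A := Set.image_mono hA2sub
  have hS2B2 : ∀ u, Sum.inr u ∈ S → u ∈ ⇑σ '' A2 := by
    intro u hu
    rw [hmemB2]
    show Sum.inr (σ (σ.symm u)) ∈ S
    rw [σ.apply_symm_apply]
    exact hu
  have hBdom : IsDomSet G (⇑σ '' A) := by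
    intro v
    obtain ⟨d, hdS, hd⟩ := hSdom (Sum.inr v)
    match d with
    | Sum.inr u =>
      rcases hd with h | h
      · have hv2 : v ∈ ⇑σ '' A2 := by rw [← Sum.inr.inj h]; exact hS2B2 u hdS
        exact ⟨v, hB2sub hv2, Or.inl rfl⟩
      · exact ⟨u, hB2sub (hS2B2 u hdS), Or.inr h⟩
    | Sum.inl u =>
      rcases hd with h | h
      · exact absurd h (by simp)
      · -- h : σ u = v, u ∈ A1
        exact ⟨v, hB1sub ⟨u, hdS, h⟩, Or.inl rfl⟩
  have hF3 : ∀ v ∉ ⇑σ '' A, ∃ t ∈ ⇑σ '' A2, G.Adj t v := by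
    intro v hv
    obtain ⟨d, hdS, hd⟩ := hSdom (Sum.inr v)
    match d with
    | Sum.inr u =>
      rcases hd with h | h
      · exact absurd (hB2sub (by rw [← Sum.inr.inj h]; exact hS2B2 u hdS)) hv
      · exact ⟨u, hS2B2 u hdS, h⟩
    | Sum.inl u =>
      rcases hd with h | h
      · exact absurd h (by simp)
      · exact absurd (hB1sub ⟨u, hdS, h⟩) hv
  have hBcard : (⇑σ '' A).ncard = domNum G := by
    rw [Set.ncard_image_of_injective _ σ.injective, hAcard]
  have hBdisj : Disjoint (⇑σ '' A1) (⇑σ '' A2) :=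
    (Set.disjoint_image_iff σ.injective).2 hdisj
  have hBunion : ⇑σ '' A = ⇑σ '' A1 ∪ ⇑σ '' A2 := Set.image_union _ _ _
  -- F2 and F4 via minimality
  have hF2 : ∀ a ∈ A2, ∀ b, G.Adj a b → b ∉ A := by
    intro a ha b hab
    exact no_nbr_of_min G A A1 hAcard hF1 hA1sub (hA2sub ha)
      (fun h => (Set.disjoint_left.1 hdisj h) ha) hab
  have hF4 : ∀ b ∈ ⇑σ '' A1, ∀ c, G.Adj b c → c ∉ ⇑σ '' A := by
    intro b hb c hbc
    refine no_nbr_of_min G (⇑σ '' A) (⇑σ '' A2) hBcard hF3 hB2sub (hB1sub hb)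
      (fun h => (Set.disjoint_left.1 hBdisj hb) h) hbc
  -- now the case analysis on x
  set z : V := σ.symm x with hz_def
  have hzs : z ∈ s := hσ_symm_mem x hxs
  have hzx : z ≠ x := hσ_symm_ne x hxs
  have hxz : G.Adj x z := hs_N hzs hzx
  by_cases hx1 : x ∈ A1
  · -- Case 1 : x ∈ A1
    by_cases hz2 : z ∈ A2
    · exact hF2 z hz2 x hxz.symm (hA1sub hx1)
    by_cases hz1 : z ∈ A1
    · -- w := σ x
      have hws : σ x ∈ s := hσ_mem x hxs
      have hwx : σ x ≠ x := hσ_ne x hxs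
      have hxw : G.Adj x (σ x) := hs_N hws hwx
      have hwB1 : σ x ∈ ⇑σ '' A1 := by
        rw [hmemB1, σ.symm_apply_apply]; exact hx1
      have hxB : x ∈ ⇑σ '' A := by rw [hmemB]; exact hA1sub hz1
      exact hF4 (σ x) hwB1 x hxw.symm hxB
    · -- z ∉ A
      have hzA : z ∉ A := by
        rintro (h | h)
        exacts [hz1 h, hz2 h]
      have hxB : x ∉ ⇑σ '' A := by rw [hmemB]; exact hzA
      obtain ⟨t, ht2, htx⟩ := hF3 x hxB
      have hts : t ∈ s := hN_s htx.symm
      have hu' : σ.symm t ∈ A2 := (hmemB2 t).1 ht2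
      have hu's : σ.symm t ∈ s := hσ_symm_mem t hts
      have hu'x : σ.symm t ≠ x := by
        rintro h
        rw [h] at hu'
        exact (Set.disjoint_left.1 hdisj hx1) hu'
      have hadj : G.Adj x (σ.symm t) := hs_N hu's hu'x
      exact hF2 (σ.symm t) hu' x hadj.symm (hA1sub hx1)
  by_cases hx2 : x ∈ A2
  · -- Case 2 : x ∈ A2
    have hys : σ x ∈ s := hσ_mem x hxs
    have hyx : σ x ≠ x := hσ_ne x hxs
    have hxy : G.Adj x (σ x) := hs_N hys hyx
    have hyA : σ x ∉ A := hF2 x hx2 (σ x) hxy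
    obtain ⟨u, hu1, huy⟩ := hF1 (σ x) hyA
    have hux : u ≠ x := fun h => hx1 (h ▸ hu1)
    have hus : u ∉ s := by
      intro h
      exact hindep u (σ x) (hs_N h hux) hxy huy
    have huB1 : u ∈ ⇑σ '' A1 := by
      rw [hmemB1, hσ_symm_fix u hus]; exact hu1
    have hyB : σ x ∈ ⇑σ '' A := by
      rw [hmemB, σ.symm_apply_apply]; exact hA2sub hx2
    exact hF4 u huB1 (σ x) huy hyB
  · -- Case 3 : x ∉ A
    have hxA : x ∉ A := by
      rintro (h | h)
      exacts [hx1 h, hx2 h]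
    have hzA : z ∈ A := by
      by_contra hzA
      -- closure of N(x) ∩ A under σ
      have hclosed : ∀ v, G.Adj x v → v ∈ A → G.Adj x (σ v) ∧ σ v ∈ A := by
        intro v hxv hvA
        have hvs : v ∈ s := hN_s hxv
        have h1 : σ v ∈ s := hσ_mem v hvs
        have h2 : σ v ≠ x := by
          intro h
          have : v = z := by rw [hz_def, ← h, σ.symm_apply_apply]
          exact hzA (this ▸ hvA)
        have hxσv : G.Adj x (σ v) := hs_N h1 h2
        refine ⟨hxσv, ?_⟩
        by_contra hσvA
        obtain ⟨u, hu1, hu⟩ := hF1 (σ v) hσvA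
        have hux : u ≠ x := fun h => hx1 (h ▸ hu1)
        have hus : u ∉ s := by
          intro h
          exact hindep u (σ v) (hs_N h hux) hxσv hu
        have huB1 : u ∈ ⇑σ '' A1 := by
          rw [hmemB1, hσ_symm_fix u hus]; exact hu1
        have hσvB : σ v ∈ ⇑σ '' A := by
          rw [hmemB, σ.symm_apply_apply]; exact hvA
        exact hF4 u huB1 (σ v) hu hσvB
      obtain ⟨u0, hu01, hu0x⟩ := hF1 x hxA
      have hxu0 : G.Adj x u0 := hu0x.symm
      have hiter : ∀ n : ℕ, G.Adj x ((σ ^ n) u0) ∧ (σ ^ n) u0 ∈ A := by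
        intro n
        induction n with
        | zero => simpa using ⟨hxu0, hA1sub hu01⟩
        | succ n ih =>
          have h := hclosed _ ih.1 ih.2
          rw [pow_succ']
          simpa using h
      obtain ⟨n, hn⟩ := hcyc.exists_pow_eq (hσ_ne u0 (hN_s hxu0)) (hσ_ne x hxs)
      have := (hiter n).1
      rw [hn] at this
      exact G.irrefl this
    by_cases hz2 : z ∈ A2
    · -- 3a
      obtain ⟨u, hu1, hux⟩ := hF1 x hxA
      have hxu : G.Adj x u := hux.symm
      have hus : u ∈ s := hN_s hxu
      have huz : u ≠ z := fun h => (Set.disjoint_left.1 hdisj hu1) (h ▸ hz2)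
      have hσux : σ u ≠ x := by
        intro h
        exact huz (by rw [hz_def, ← h, σ.symm_apply_apply])
      have hσus : σ u ∈ s := hσ_mem u hus
      have hxσu : G.Adj x (σ u) := hs_N hσus hσux
      have hσuB1 : σ u ∈ ⇑σ '' A1 := by
        rw [hmemB1, σ.symm_apply_apply]; exact hu1
      have hxB : x ∈ ⇑σ '' A := by rw [hmemB]; exact hzA
      exact hF4 (σ u) hσuB1 x hxσu.symm hxB
    · -- 3b : z ∈ A1
      have hz1 : z ∈ A1 := by
        rcases hzA with h | h
        · exact h
        · exact absurd h hz2
      have hxB1 : x ∈ ⇑σ '' A1 := by rw [hmemB1]; exact hz1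
      have hzB : z ∉ ⇑σ '' A := hF4 x hxB1 z hxz
      obtain ⟨t, ht2, htz⟩ := hF3 z hzB
      have htx : t ≠ x := fun h =>
        (Set.disjoint_left.1 hBdisj hxB1) (h ▸ ht2)
      have hts : t ∉ s := by
        intro h
        exact hindep t z (hs_N h htx) hxz htz
      have htA2 : t ∈ A2 := by
        rw [hmemB2, hσ_symm_fix t hts] at ht2
        exact ht2
      exact hF2 t htA2 z htz (hA1sub hz1)
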